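/- Let S ⊆ ℕ contain a nonzero element and be closed under addition, let e = gcd S, let d ≥ 1 be an integer, and let h : ℕ → ℝ≥0 satisfy h(k + s) ≥ h(k) for every k ∈ ℕ and every s ∈ S. Then for every f ∈ ℕ and every positive integer p, limsup_{m→∞} d!·h(f + m·e)/(f + m·e)^d = limsup_{k→∞} d!·h(f + k·p·e)/(f + k·p·e)^d, both limsups taken in [0, ∞]. In other words, the limsup along the arithmetic progression f + ℕ·e is unchanged when the progression is thinned to step p·e. -/

import Mathlib

open Filter
open scoped ENNReal NNReal Topology

/-- A set of naturals containing a nonzero element, closed under addition, whose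
elements have gcd 1, contains all sufficiently large naturals. -/
lemma aux_cofinite (T : Set ℕ) (h0 : ∃ n ∈ T, n ≠ 0)
    (hadd : ∀ a ∈ T, ∀ b ∈ T, a + b ∈ T)
    (hgcd : ∀ c : ℕ, (∀ s ∈ T, c ∣ s) → c ∣ 1) :
    ∃ N : ℕ, ∀ n, N ≤ n → n ∈ T := by
  set M := AddSubmonoid.closure T with hM
  have hMT : ∀ n ∈ M, n ≠ 0 → n ∈ T := by
    intro n hn
    induction hn using AddSubmonoid.closure_induction with
    | mem x hx => exact fun _ => hx
    | zero => exact fun hh => absurd rfl hh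
    | add x y hx hy ihx ihy =>
      intro hxy
      rcases Nat.eq_zero_or_pos x with rfl | hx0
      · simpa using ihy (by simpa using hxy)
      rcases Nat.eq_zero_or_pos y with rfl | hy0
      · simpa using ihx (by simpa using hxy)
      · exact hadd x (ihx hx0.ne') y (ihy hy0.ne')
  -- the subgroup of ℤ of differences of elements of M
  let K : AddSubgroup ℤ :=
    { carrier := {z | ∃ a ∈ M, ∃ b ∈ M, (a : ℤ) - (b : ℤ) = z}
      zero_mem' := ⟨0, zero_mem M, 0, zero_mem M, by simp⟩
      add_mem' := by
        rintro x y ⟨a, ha, b, hb, rfl⟩ ⟨a', ha', b', hb', rfl⟩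
        exact ⟨a + a', add_mem ha ha', b + b', add_mem hb hb', by push_cast; ring⟩
      neg_mem' := by
        rintro x ⟨a, ha, b, hb, rfl⟩
        exact ⟨b, hb, a, ha, by push_cast; ring⟩ }
  have hTK : ∀ t ∈ T, (t : ℤ) ∈ K := fun t ht =>
    ⟨t, AddSubmonoid.subset_closure ht, 0, zero_mem M, by simp⟩
  obtain ⟨g, hg⟩ := Int.subgroup_cyclic K
  have hgdvd : ∀ t ∈ T, g.natAbs ∣ t := by
    intro t ht
    have hmem := hTK t ht
    rw [hg, AddSubgroup.mem_closure_singleton] at hmem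
    obtain ⟨n, hn⟩ := hmem
    have hdvd : g ∣ (t : ℤ) := ⟨n, by rw [← hn, smul_eq_mul, mul_comm]⟩
    simpa using Int.natAbs_dvd_natAbs.mpr hdvd
  have hg1 : g.natAbs = 1 := Nat.dvd_one.mp (hgcd g.natAbs hgdvd)
  have h1K : (1 : ℤ) ∈ K := by
    rw [hg, AddSubgroup.mem_closure_singleton]
    rcases Int.natAbs_eq g with h | h
    · exact ⟨1, by rw [hg1] at h; simp [h]⟩
    · exact ⟨-1, by rw [hg1] at h; simp [h]⟩
  obtain ⟨a, ha, b, hb, hab⟩ := h1K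
  have hab' : a = b + 1 := by omega
  refine ⟨b * b + 1, fun n hn => ?_⟩
  have hn0 : n ≠ 0 := by omega
  apply hMT n _ hn0
  rcases Nat.eq_zero_or_pos b with rfl | hb0
  · have ha1 : a = 1 := by omega
    have hmem : n • a ∈ M := nsmul_mem ha n
    simpa [ha1, smul_eq_mul] using hmem
  · set q := n / b with hq
    set r := n % b with hr
    have hrb : r < b := Nat.mod_lt _ hb0
    have hbq : b ≤ q := by
      rw [hq, Nat.le_div_iff_mul_le hb0]
      omega
    have hkey : n = r * a + (q - r) * b := by
      have h1 : b * q + r = n := Nat.div_add_mod n b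
      have h2 : r ≤ q := hrb.le.trans hbq
      have h3 : (q - r) * b = q * b - r * b := Nat.sub_mul q r b
      have h4 : r * b ≤ q * b := Nat.mul_le_mul_right b h2
      have h5 : r * a = r * b + r := by rw [hab']; ring
      have h6 : b * q = q * b := Nat.mul_comm b q
      omega
    rw [hkey]
    exact add_mem (by simpa [smul_eq_mul] using nsmul_mem ha r)
      (by simpa [smul_eq_mul] using nsmul_mem hb (q - r))

lemma aux_limsup_comp_le {u : ℕ → ℝ≥0∞} {k : ℕ → ℕ} (hk : Tendsto k atTop atTop) :
    limsup (fun n => u (k n)) atTop ≤ limsup u atTop := by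
  have h1 : limsup (fun n => u (k n)) atTop = limsup u (Filter.map k atTop) := by
    simp only [Filter.limsup_eq, Filter.eventually_map]
  rw [h1]
  exact limsup_le_limsup_of_le hk


theorem limsup_progression_eq_limsup_thinned (S : Set ℕ)
    (hS0 : ∃ n ∈ S, n ≠ 0)
    (hSadd : ∀ a ∈ S, ∀ b ∈ S, a + b ∈ S)
    (e : ℕ)
    (he : (∀ s ∈ S, e ∣ s) ∧ ∀ c : ℕ, (∀ s ∈ S, c ∣ s) → c ∣ e)
    (d : ℕ) (hd : 1 ≤ d)
    (h : ℕ → ℝ≥0)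
    (hmono : ∀ k : ℕ, ∀ s ∈ S, h k ≤ h (k + s))
    (f p : ℕ) (hp : 0 < p) :
    limsup (fun m : ℕ =>
        (Nat.factorial d : ℝ≥0∞) * (h (f + m * e) : ℝ≥0∞)
          / ((f + m * e : ℕ) : ℝ≥0∞) ^ d) atTop
      = limsup (fun k : ℕ =>
          (Nat.factorial d : ℝ≥0∞) * (h (f + k * p * e) : ℝ≥0∞)
            / ((f + k * p * e : ℕ) : ℝ≥0∞) ^ d) atTop := by
  obtain ⟨s0, hs0S, hs0⟩ := hS0
  have he0 : 0 < e := by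
    rcases Nat.eq_zero_or_pos e with h0 | hh
    · exfalso
      have := he.1 s0 hs0S
      rw [h0] at this
      exact hs0 (Nat.eq_zero_of_zero_dvd this)
    · exact hh
  set u : ℕ → ℝ≥0∞ := fun m =>
    (Nat.factorial d : ℝ≥0∞) * (h (f + m * e) : ℝ≥0∞) / ((f + m * e : ℕ) : ℝ≥0∞) ^ d with hu
  -- the set of multipliers
  set T : Set ℕ := {n | n * e ∈ S} with hTdef
  have hTs : ∀ s ∈ S, s / e ∈ T ∧ s / e * e = s := by
    intro s hs
    have hdvd := he.1 s hs
    refine ⟨?_, Nat.div_mul_cancel hdvd⟩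
    show s / e * e ∈ S
    rwa [Nat.div_mul_cancel hdvd]
  obtain ⟨N, hN⟩ := aux_cofinite T
    ⟨s0 / e, (hTs s0 hs0S).1, by
      intro h0
      apply hs0
      have h2 := (hTs s0 hs0S).2
      rw [h0] at h2
      simpa using h2.symm⟩
    (fun a ha b hb => by
      show (a + b) * e ∈ S
      rw [add_mul]
      exact hSadd _ ha _ hb)
    (by
      intro c hc
      have hce : c * e ∣ e := he.2 (c * e) (fun s hs => by
        obtain ⟨ht, heq⟩ := hTs s hs
        calc c * e ∣ (s / e) * e := Nat.mul_dvd_mul (hc _ ht) dvd_rfl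
          _ = s := heq)
      have : c * e ∣ 1 * e := by simpa using hce
      exact (Nat.mul_dvd_mul_iff_right he0).mp this)
  apply le_antisymm
  · -- LHS ≤ RHS
    apply ENNReal.le_of_forall_lt_one_mul_le
    intro a ha
    set c := N + p + 1 with hc
    set k : ℕ → ℕ := fun m => (m + N) / p + 1 with hk
    have hkp_gt : ∀ m, m + N < k m * p := by
      intro m
      have h1 := Nat.div_add_mod (m + N) p
      have h2 : (m + N) % p < p := Nat.mod_lt _ hp
      have h3 : k m * p = p * ((m + N) / p) + p := by
        simp only [hk, add_mul, one_mul, Nat.mul_comm]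
      omega
    have hkp_le : ∀ m, k m * p ≤ m + c := by
      intro m
      have h1 : ((m + N) / p) * p ≤ m + N := Nat.div_mul_le_self _ _
      have h3 : k m * p = ((m + N) / p) * p + p := by
        simp only [hk, add_mul, one_mul]
      omega
    have hkT : Tendsto k atTop atTop := by
      rw [tendsto_atTop_atTop]
      intro b
      refine ⟨b * p, fun m hm => ?_⟩
      have : (b * p) / p ≤ (m + N) / p := Nat.div_le_div_right (by omega)
      rw [Nat.mul_div_cancel b hp] at this
      simp only [hk]
      omega
    -- a as an NNReal
    lift a to ℝ≥0 using ha.ne_top with a' ha'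
    have ha1 : (a' : ℝ) < 1 := by exact_mod_cast ha
    -- real ratio tendsto 1
    have hAtop : Tendsto (fun m : ℕ => ((f + m * e : ℕ) : ℝ)) atTop atTop := by
      apply tendsto_natCast_atTop_atTop.comp
      apply tendsto_atTop_mono (fun m => ?_) tendsto_id
      calc (m : ℕ) ≤ m * e := Nat.le_mul_of_pos_right m he0
        _ ≤ f + m * e := Nat.le_add_left _ _
    have hyfun : Tendsto (fun y : ℝ => y / (y + (c * e : ℕ))) atTop (𝓝 1) := by
      have h0 : Tendsto (fun y : ℝ => ((c * e : ℕ) : ℝ) / (y + (c * e : ℕ))) atTop (𝓝 0) :=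
        tendsto_const_nhds.div_atTop (tendsto_atTop_add_const_right _ _ tendsto_id)
      have h1 : Tendsto (fun y : ℝ => 1 - ((c * e : ℕ) : ℝ) / (y + (c * e : ℕ))) atTop (𝓝 1) := by
        simpa using tendsto_const_nhds.sub h0
      apply h1.congr'
      filter_upwards [eventually_gt_atTop (0 : ℝ)] with y hy
      have hne : y + ((c * e : ℕ) : ℝ) ≠ 0 := by positivity
      field_simp
      ring
    have hratio : Tendsto
        (fun m : ℕ => ((f + m * e : ℕ) : ℝ) / ((f + (m + c) * e : ℕ) : ℝ)) atTop (𝓝 1) := by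
      have := hyfun.comp hAtop
      apply this.congr
      intro m
      simp only [Function.comp]
      congr 1
      push_cast
      ring
    have hpow : Tendsto
        (fun m : ℕ => (((f + m * e : ℕ) : ℝ) / ((f + (m + c) * e : ℕ) : ℝ)) ^ d)
        atTop (𝓝 1) := by
      simpa using hratio.pow d
    have hev : ∀ᶠ m : ℕ in atTop,
        (a' : ℝ) * ((f + (m + c) * e : ℕ) : ℝ) ^ d ≤ ((f + m * e : ℕ) : ℝ) ^ d := by
      filter_upwards [hpow.eventually (eventually_gt_nhds ha1)] with m hm
      have hYpos : (0 : ℝ) < ((f + (m + c) * e : ℕ) : ℝ) := by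
        have : 0 < f + (m + c) * e := by positivity
        exact_mod_cast this
      rw [div_pow, lt_div_iff₀ (by positivity)] at hm
      exact hm.le
    have key : ∀ᶠ m : ℕ in atTop, ↑a' * u m ≤ u (k m * p) := by
      filter_upwards [hev, eventually_ge_atTop 1] with m hineq hm1
      -- notation
      have hkm1 : 1 ≤ k m := Nat.le_add_left 1 _
      have hmlt : m < k m * p := by have := hkp_gt m; omega
      -- h monotonicity
      set t := k m * p - m with ht
      have htN : N ≤ t := by have := hkp_gt m; omega
      have htT : t * e ∈ S := hN t htN
      have hXZ : f + m * e + t * e = f + (k m * p) * e := by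
        have h1 : t * e = k m * p * e - m * e := by
          rw [ht, Nat.sub_mul]
        have h2 : m * e ≤ k m * p * e := Nat.mul_le_mul_right e hmlt.le
        omega
      have hhm : h (f + m * e) ≤ h (f + (k m * p) * e) := by
        rw [← hXZ]
        exact hmono (f + m * e) (t * e) htT
      -- cast inequality to ℝ≥0∞
      have hZle : (f + k m * p * e : ℕ) ≤ (f + (m + c) * e : ℕ) := by
        have := hkp_le m
        have h2 : k m * p * e ≤ (m + c) * e := Nat.mul_le_mul_right e (hkp_le m)
        omega
      have ineq2 : (a' : ℝ≥0∞) * ((f + k m * p * e : ℕ) : ℝ≥0∞) ^ d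
          ≤ ((f + m * e : ℕ) : ℝ≥0∞) ^ d := by
        calc (a' : ℝ≥0∞) * ((f + k m * p * e : ℕ) : ℝ≥0∞) ^ d
            ≤ (a' : ℝ≥0∞) * ((f + (m + c) * e : ℕ) : ℝ≥0∞) ^ d := by
              gcongr
          _ ≤ ((f + m * e : ℕ) : ℝ≥0∞) ^ d := by
              rw [← ENNReal.coe_natCast (f + (m + c) * e), ← ENNReal.coe_natCast (f + m * e),
                ← ENNReal.coe_pow, ← ENNReal.coe_pow, ← ENNReal.coe_mul, ENNReal.coe_le_coe,
                ← NNReal.coe_le_coe]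
              push_cast at hineq ⊢
              exact hineq
      -- assemble
      have hXpos : 0 < f + m * e := by
        have : 1 * e ≤ m * e := Nat.mul_le_mul_right e hm1
        omega
      have hZpos : 0 < f + k m * p * e := by
        have h1 : 1 ≤ k m * p := by omega
        have : 1 * e ≤ k m * p * e := Nat.mul_le_mul_right e h1
        omega
      have hZd0 : ((f + k m * p * e : ℕ) : ℝ≥0∞) ^ d ≠ 0 :=
        pow_ne_zero _ (by exact_mod_cast hZpos.ne')
      have hZdt : ((f + k m * p * e : ℕ) : ℝ≥0∞) ^ d ≠ ∞ :=
        ENNReal.pow_ne_top (ENNReal.natCast_ne_top _)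
      have hXd0 : ((f + m * e : ℕ) : ℝ≥0∞) ^ d ≠ 0 :=
        pow_ne_zero _ (by exact_mod_cast hXpos.ne')
      have hXdt : ((f + m * e : ℕ) : ℝ≥0∞) ^ d ≠ ∞ :=
        ENNReal.pow_ne_top (ENNReal.natCast_ne_top _)
      show (a' : ℝ≥0∞) * ((Nat.factorial d : ℝ≥0∞) * (h (f + m * e) : ℝ≥0∞)
            / ((f + m * e : ℕ) : ℝ≥0∞) ^ d)
          ≤ (Nat.factorial d : ℝ≥0∞) * (h (f + k m * p * e) : ℝ≥0∞)
            / ((f + k m * p * e : ℕ) : ℝ≥0∞) ^ d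
      rw [← mul_div_assoc, ENNReal.div_le_iff_le_mul (Or.inl hXd0) (Or.inl hXdt)]
      calc (a' : ℝ≥0∞) * ((Nat.factorial d : ℝ≥0∞) * (h (f + m * e) : ℝ≥0∞))
          ≤ (a' : ℝ≥0∞) * ((Nat.factorial d : ℝ≥0∞) * (h (f + k m * p * e) : ℝ≥0∞)) := by
            gcongr
        _ = (Nat.factorial d : ℝ≥0∞) * (h (f + k m * p * e) : ℝ≥0∞)
              / ((f + k m * p * e : ℕ) : ℝ≥0∞) ^ d
              * ((a' : ℝ≥0∞) * ((f + k m * p * e : ℕ) : ℝ≥0∞) ^ d) := by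
            rw [div_eq_mul_inv]
            rw [show (Nat.factorial d : ℝ≥0∞) * (h (f + k m * p * e) : ℝ≥0∞)
                * (((f + k m * p * e : ℕ) : ℝ≥0∞) ^ d)⁻¹
                * ((a' : ℝ≥0∞) * ((f + k m * p * e : ℕ) : ℝ≥0∞) ^ d)
              = (a' : ℝ≥0∞) * ((Nat.factorial d : ℝ≥0∞) * (h (f + k m * p * e) : ℝ≥0∞))
                * ((((f + k m * p * e : ℕ) : ℝ≥0∞) ^ d)⁻¹
                  * ((f + k m * p * e : ℕ) : ℝ≥0∞) ^ d) from by ring]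
            rw [ENNReal.inv_mul_cancel hZd0 hZdt, mul_one]
        _ ≤ (Nat.factorial d : ℝ≥0∞) * (h (f + k m * p * e) : ℝ≥0∞)
              / ((f + k m * p * e : ℕ) : ℝ≥0∞) ^ d
              * ((f + m * e : ℕ) : ℝ≥0∞) ^ d := by
            exact mul_le_mul_right ineq2 _
    calc (a' : ℝ≥0∞) * limsup u atTop
        = limsup (fun m => (a' : ℝ≥0∞) * u m) atTop :=
          (ENNReal.limsup_const_mul_of_ne_top ENNReal.coe_ne_top).symm
      _ ≤ limsup (fun m => u (k m * p)) atTop := limsup_le_limsup key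
      _ ≤ limsup (fun j => u (j * p)) atTop := by
          exact aux_limsup_comp_le (k := k) (u := fun j => u (j * p)) hkT
      _ = limsup (fun j : ℕ =>
            (Nat.factorial d : ℝ≥0∞) * (h (f + j * p * e) : ℝ≥0∞)
              / ((f + j * p * e : ℕ) : ℝ≥0∞) ^ d) atTop := rfl
  · -- RHS ≤ LHS
    have hmulp : Tendsto (fun j : ℕ => j * p) atTop atTop := by
      apply tendsto_atTop_mono (fun j => Nat.le_mul_of_pos_right j hp) tendsto_id
    exact aux_limsup_comp_le (k := fun j => j * p) (u := u) hmulp
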